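/- If a graph G has no cycle of length 4 (i.e., G is C₄-free), then τ(G) = n − α(G), where n is the number of vertices and α(G) is the independence number. -/

import Mathlib

open Finset

/-- `A i`, `B i` (for `i : Fin k`) form a bipartite decomposition of `G`. -/
def IsBipDecomp {V : Type*} [DecidableEq V] (G : SimpleGraph V)
    {k : ℕ} (A B : Fin k → Finset V) : Prop :=
  (∀ i, Disjoint (A i) (B i)) ∧
  (∀ i, ∀ a ∈ A i, ∀ b ∈ B i, G.Adj a b) ∧
  ∀ e ∈ G.edgeSet, ∃! i : Fin k, e ∈ (A i ×ˢ B i).image fun p => s(p.1, p.2)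

/-- The independence number `α(G)`: the largest cardinality of a vertex subset
spanning no edge of `G`. -/
noncomputable def indepNum {V : Type*} [Fintype V] (G : SimpleGraph V) : ℕ :=
  sSup {m | ∃ I : Finset V, I.card = m ∧ ∀ u ∈ I, ∀ v ∈ I, ¬ G.Adj u v}

lemma indepSet_bdd {V : Type*} [Fintype V] (G : SimpleGraph V) :
    BddAbove {m | ∃ I : Finset V, I.card = m ∧ ∀ u ∈ I, ∀ v ∈ I, ¬ G.Adj u v} := by
  refine ⟨Fintype.card V, ?_⟩
  rintro m ⟨I, hI, -⟩
  rw [← hI, ← Finset.card_univ]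
  exact Finset.card_le_univ I

lemma indepSet_spec {V : Type*} [Fintype V] (G : SimpleGraph V) :
    ∃ I : Finset V, I.card = indepNum G ∧ ∀ u ∈ I, ∀ v ∈ I, ¬ G.Adj u v := by
  have h0 : (0:ℕ) ∈ {m | ∃ I : Finset V, I.card = m ∧ ∀ u ∈ I, ∀ v ∈ I, ¬ G.Adj u v} :=
    ⟨∅, by simp⟩
  exact Nat.sSup_mem ⟨0, h0⟩ (indepSet_bdd G)

lemma le_indepNum {V : Type*} [Fintype V] (G : SimpleGraph V) {I : Finset V}
    (hI : ∀ u ∈ I, ∀ v ∈ I, ¬ G.Adj u v) : I.card ≤ indepNum G :=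
  le_csSup (indepSet_bdd G) ⟨I, rfl, hI⟩

/-- If `G` contains no 4-cycle, then `τ(G) = n - α(G)`: every bipartite
decomposition has at least `n - α(G)` parts, and one with exactly `n - α(G)`
parts exists. -/
theorem stmt4 {V : Type*} [Fintype V] [DecidableEq V] (G : SimpleGraph V)
    (hC4 : ¬ ∃ a b c d : V, a ≠ b ∧ a ≠ c ∧ a ≠ d ∧ b ≠ c ∧ b ≠ d ∧ c ≠ d ∧
      G.Adj a b ∧ G.Adj b c ∧ G.Adj c d ∧ G.Adj d a) :
    (∀ (k : ℕ) (A B : Fin k → Finset V),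
        IsBipDecomp G A B → Fintype.card V - indepNum G ≤ k) ∧
    ∃ A B : Fin (Fintype.card V - indepNum G) → Finset V, IsBipDecomp G A B := by
  classical
  constructor
  · rintro k A B ⟨hdisj, hadj, huniq⟩
    set S : Fin k → Finset V := fun i => if (A i).card ≤ 1 then A i else B i with hSdef
    have hScard : ∀ i, (S i).card ≤ 1 := by
      intro i
      by_cases h : (A i).card ≤ 1
      · simpa [hSdef, h] using h
      · simp only [hSdef, if_neg h]
        by_contra hb
        push_neg at h hb
        obtain ⟨a, ha, a', ha', haa⟩ := Finset.one_lt_card.mp h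
        obtain ⟨b, hbm, b', hb', hbb⟩ := Finset.one_lt_card.mp hb
        have hne : ∀ x ∈ A i, ∀ y ∈ B i, x ≠ y := fun x hx y hy hxy =>
          Finset.disjoint_left.mp (hdisj i) hx (hxy ▸ hy)
        refine hC4 ⟨a, b, a', b', ?_, haa, ?_, ?_, ?_, ?_, ?_, ?_, ?_, ?_⟩
        · exact hne a ha b hbm
        · exact hne a ha b' hb'
        · exact fun he => hne a' ha' b hbm he.symm
        · exact hbb
        · exact hne a' ha' b' hb'
        · exact hadj i a ha b hbm
        · exact (hadj i a' ha' b hbm).symm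
        · exact hadj i a' ha' b' hb'
        · exact (hadj i a ha b' hb').symm
    set C : Finset V := Finset.univ.biUnion S with hCdef
    have hCcard : C.card ≤ k := by
      calc C.card ≤ ∑ i, (S i).card := Finset.card_biUnion_le
        _ ≤ ∑ _i : Fin k, 1 := Finset.sum_le_sum fun i _ => hScard i
        _ = k := by simp
    have hcover : ∀ u v : V, G.Adj u v → u ∈ C ∨ v ∈ C := by
      intro u v huv
      obtain ⟨i, hi, -⟩ := huniq s(u, v) (G.mem_edgeSet.mpr huv)
      obtain ⟨⟨a, b⟩, hab, heq⟩ := Finset.mem_image.mp hi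
      obtain ⟨ha, hb⟩ := Finset.mem_product.mp hab
      dsimp only at heq ha hb
      have hmem : a ∈ C ∨ b ∈ C := by
        by_cases h : (A i).card ≤ 1
        · exact Or.inl (Finset.mem_biUnion.mpr ⟨i, Finset.mem_univ i, by simp [hSdef, h, ha]⟩)
        · exact Or.inr (Finset.mem_biUnion.mpr ⟨i, Finset.mem_univ i, by simp [hSdef, h, hb]⟩)
      rcases Sym2.eq_iff.mp heq with ⟨h1, h2⟩ | ⟨h1, h2⟩
      · rwa [h1, h2] at hmem
      · rw [h1, h2] at hmem; exact hmem.symm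
    have hindep : ∀ u ∈ Finset.univ \ C, ∀ v ∈ Finset.univ \ C, ¬ G.Adj u v := by
      intro u hu v hv huv
      rcases hcover u v huv with h | h
      · exact (Finset.mem_sdiff.mp hu).2 h
      · exact (Finset.mem_sdiff.mp hv).2 h
    have hle := le_indepNum G hindep
    rw [Finset.card_sdiff_of_subset (Finset.subset_univ C), Finset.card_univ] at hle
    omega
  · obtain ⟨I, hIcard, hIindep⟩ := indepSet_spec G
    set m := Fintype.card V - indepNum G with hm
    set C : Finset V := Finset.univ \ I with hCdef
    have hCcard : C.card = m := by
      rw [hCdef, Finset.card_sdiff_of_subset (Finset.subset_univ I), Finset.card_univ, hIcard]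
    have e : {x // x ∈ C} ≃ Fin m := C.equivFin.trans (finCongr hCcard)
    set c : Fin m → V := fun i => (e.symm i : V) with hcdef
    have hcC : ∀ i, c i ∈ C := fun i => (e.symm i).2
    set key : V → ℕ := fun v => if hv : v ∈ C then (e ⟨v, hv⟩ : ℕ) else m with hkeydef
    have hkeyc : ∀ i : Fin m, key (c i) = (i : ℕ) := by
      intro i
      simp only [hkeydef, hcdef, dif_pos (hcC i)]
      congr 1
      rw [dif_pos (e.symm i).2]; exact congrArg Fin.val (e.apply_symm_apply i)
    have hkeylt : ∀ v ∈ C, key v < m := by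
      intro v hv
      simp only [hkeydef, dif_pos hv]
      exact (e ⟨v, hv⟩).2
    have hkeym : ∀ v, v ∉ C → key v = m := by
      intro v hv; simp [hkeydef, hv]
    have hkeyle : ∀ v, key v ≤ m := by
      intro v
      by_cases hv : v ∈ C
      · exact (hkeylt v hv).le
      · exact (hkeym v hv).le
    have hkeyinj : ∀ u ∈ C, ∀ v ∈ C, key u = key v → u = v := by
      intro u hu v hv h
      simp only [hkeydef, dif_pos hu, dif_pos hv] at h
      have : (⟨u, hu⟩ : {x // x ∈ C}) = ⟨v, hv⟩ := e.injective (Fin.ext h)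
      exact congrArg Subtype.val this
    have hkeyne : ∀ u v : V, G.Adj u v → key u ≠ key v := by
      intro u v huv h
      by_cases hu : u ∈ C
      · by_cases hv : v ∈ C
        · exact G.ne_of_adj huv (hkeyinj u hu v hv h)
        · rw [hkeym v hv] at h; exact absurd h (Nat.ne_of_lt (hkeylt u hu))
      · by_cases hv : v ∈ C
        · rw [hkeym u hu] at h; exact absurd h.symm (Nat.ne_of_lt (hkeylt v hv))
        · have hu' : u ∈ I := by
            rw [hCdef] at hu
            simpa using hu
          have hv' : v ∈ I := by
            rw [hCdef] at hv
            simpa using hv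
          exact hIindep u hu' v hv' huv
    refine ⟨fun i => {c i},
      fun i => Finset.univ.filter (fun v => G.Adj (c i) v ∧ (i : ℕ) < key v), ?_, ?_, ?_⟩
    · intro i
      rw [Finset.disjoint_singleton_left]
      intro h
      exact G.irrefl (Finset.mem_filter.mp h).2.1
    · intro i a ha b hb
      rw [Finset.mem_singleton] at ha
      subst ha
      exact (Finset.mem_filter.mp hb).2.1
    · intro e' he'
      induction e' using Sym2.ind with
      | _ u v =>
        rw [G.mem_edgeSet] at he'
        have main : ∀ u v : V, G.Adj u v → key u < key v →
            ∃! i : Fin m, s(u, v) ∈ (({c i} : Finset V) ×ˢ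
              (Finset.univ.filter (fun w => G.Adj (c i) w ∧ (i : ℕ) < key w))).image
              fun p => s(p.1, p.2) := by
          intro u v huv hlt
          have hu : u ∈ C := by
            by_contra hu
            rw [hkeym u hu] at hlt
            exact absurd hlt (not_lt.mpr (hkeyle v))
          refine ⟨e ⟨u, hu⟩, ?_, ?_⟩
          · have hcu : c (e ⟨u, hu⟩) = u := by
              simp only [hcdef]
              rw [e.symm_apply_apply]
            have hkeyu : key u = ((e ⟨u, hu⟩ : Fin m) : ℕ) := by
              simp only [hkeydef, dif_pos hu]
            refine Finset.mem_image.mpr ⟨(u, v), ?_, rfl⟩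
            refine Finset.mem_product.mpr ⟨?_, ?_⟩
            · simp [hcu]
            · refine Finset.mem_filter.mpr ⟨Finset.mem_univ v, ?_, ?_⟩
              · rwa [hcu]
              · rwa [← hkeyu]
          · rintro j hj
            have hcu : c (e ⟨u, hu⟩) = u := by
              simp only [hcdef]
              rw [e.symm_apply_apply]
            have hkeyu : key u = ((e ⟨u, hu⟩ : Fin m) : ℕ) := by
              simp only [hkeydef, dif_pos hu]
            obtain ⟨⟨a, b⟩, hab, heq⟩ := Finset.mem_image.mp hj
            obtain ⟨ha, hb⟩ := Finset.mem_product.mp hab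
            rw [Finset.mem_singleton] at ha
            subst ha
            obtain ⟨-, -, hjb⟩ := Finset.mem_filter.mp hb
            rcases Sym2.eq_iff.mp heq with ⟨h1, h2⟩ | ⟨h1, h2⟩
            · apply Fin.ext
              rw [← hkeyu, ← h1, hkeyc]
            · exfalso
              have hx : (j : ℕ) < key u := h2 ▸ hjb
              have hy : key v = (j : ℕ) := by rw [← h1, hkeyc]
              omega
        have hne := hkeyne u v he'
        rcases lt_or_gt_of_ne hne with h | h
        · exact main u v he' h
        · have := main v u he'.symm h
          rwa [Sym2.eq_swap] at this
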